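/- arXiv:2109.06584 — 2 statements merged into one kernel-verified Lean document; each statement's English description precedes it below -/
import Mathlib

section
/- Quadratic runtime of the single-bit-flip non-elitist algorithm on DLB: Let n be an even positive integer. Consider the Markov chain on {0,1}^n whose one-step transition from a state x is: choose i ∈ [1..n] uniformly at random and let y be x with bit i flipped; move to y if either (DLB(x) is even and DLB(y) > DLB(x)) or (DLB(x) is odd and DLB(y) > DLB(x) − 2), and stay at x otherwise. Then, from any initial state, the expected number of steps until the chain first reaches the optimum (1,…,1) is at most n². -/
/-- Number of leading ones among positions `0, …, n-1` of `x : ℕ → Bool`. -/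
def LOn (n : ℕ) (x : ℕ → Bool) : ℕ :=
  ((Finset.range n).filter (fun r => ∀ s ≤ r, x s = true)).card

/-- The DeceivingLeadingBlocks function (0-based encoding of bit positions):
blocks are `(x (2ℓ), x (2ℓ+1))`; if `x` is not the all-ones string and `m` is the
index of the first non-`11` block, then the value is `2m+1` for a `00` critical
block, `2m` for a `01`/`10` critical block, and `n` for the all-ones string. -/
def DLBn (n : ℕ) (x : ℕ → Bool) : ℕ :=
  if ∀ i < n, x i = true then n
  else if x (2 * (LOn n x / 2)) = false ∧ x (2 * (LOn n x / 2) + 1) = false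
    then 2 * (LOn n x / 2) + 1
    else 2 * (LOn n x / 2)

/-- The Honest Leading Blocks function with parameter `δ`:
`HLB_δ(x) = 2m` if `DLB(x) = 2m+1`, `HLB_δ(x) = 2m+2-δ` if `DLB(x) = 2m` (for
`m ∈ [0..n/2-1]`), and `HLB_δ(x) = n` if `DLB(x) = n`. -/
noncomputable def HLBn (n : ℕ) (δ : ℝ) (x : ℕ → Bool) : ℝ :=
  if ∀ i < n, x i = true then (n : ℝ)
  else if x (2 * (LOn n x / 2)) = false ∧ x (2 * (LOn n x / 2) + 1) = false
    then (2 * (LOn n x / 2) : ℕ)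
    else (2 * (LOn n x / 2) : ℕ) + 2 - δ

/-- Extend a bit string `x : Fin n → Bool` to all of `ℕ` (by `false` outside). -/
def toNatFun {n : ℕ} (x : Fin n → Bool) : ℕ → Bool :=
  fun i => if h : i < n then x ⟨i, h⟩ else false

/-- The LeadingOnes value of a bit string of length `n`. -/
def LO {n : ℕ} (x : Fin n → Bool) : ℕ := LOn n (toNatFun x)

/-- The DeceivingLeadingBlocks value of a bit string of length `n`. -/
def DLB {n : ℕ} (x : Fin n → Bool) : ℕ := DLBn n (toNatFun x)

/-- The Honest Leading Blocks value (parameter `δ`) of a bit string of length `n`. -/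
noncomputable def HLB {n : ℕ} (δ : ℝ) (x : Fin n → Bool) : ℝ := HLBn n δ (toNatFun x)

/-- One step of the single-bit-flip non-elitist algorithm on `DLB`, started at
`x`: choose a position `i` uniformly at random and let `y` be `x` with bit `i`
flipped; move to `y` if either `DLB x` is even and `DLB y > DLB x`, or `DLB x`
is odd and `DLB y > DLB x - 2`; stay at `x` otherwise. -/
noncomputable def sbfStep (n : ℕ) [NeZero n] (x : Fin n → Bool) :
    PMF (Fin n → Bool) :=
  (PMF.uniformOfFintype (Fin n)).map fun i =>
    if (Even (DLB x) ∧ DLB x < DLB (Function.update x i (!(x i)))) ∨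
        (¬ Even (DLB x) ∧
          (DLB x : ℤ) - 2 < (DLB (Function.update x i (!(x i))) : ℤ))
      then Function.update x i (!(x i)) else x

/-- `t`-fold iteration of a Markov transition rule `step`, started at `x`. -/
noncomputable def iterStep {S : Type*} (step : S → PMF S) : ℕ → S → PMF S
  | 0, x => PMF.pure x
  | t + 1, x => (iterStep step t x).bind step
section LOnLemmas

variable {n : ℕ} {x : ℕ → Bool}

lemma LOn_eq_of {L : ℕ} (hLn : L ≤ n)
    (h1 : ∀ s < L, x s = true) (h2 : L < n → x L = false) : LOn n x = L := by
  unfold LOn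
  have hset : (Finset.range n).filter (fun r => ∀ s ≤ r, x s = true)
      = Finset.range L := by
    ext r
    simp only [Finset.mem_filter, Finset.mem_range]
    constructor
    · rintro ⟨hrn, hP⟩
      by_contra h
      push_neg at h
      have hLlt : L < n := lt_of_le_of_lt h hrn
      have := hP L h
      rw [h2 hLlt] at this
      exact Bool.false_ne_true this
    · intro hr
      exact ⟨lt_of_lt_of_le hr hLn, fun s hs => h1 s (lt_of_le_of_lt hs hr)⟩
  rw [hset, Finset.card_range]

lemma le_LOn_of {L : ℕ} (hLn : L ≤ n) (h1 : ∀ s < L, x s = true) :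
    L ≤ LOn n x := by
  have hsub : Finset.range L ⊆
      (Finset.range n).filter (fun r => ∀ s ≤ r, x s = true) := by
    intro r hr
    rw [Finset.mem_range] at hr
    rw [Finset.mem_filter, Finset.mem_range]
    exact ⟨lt_of_lt_of_le hr hLn, fun s hs => h1 s (lt_of_le_of_lt hs hr)⟩
  calc L = (Finset.range L).card := (Finset.card_range L).symm
    _ ≤ _ := Finset.card_le_card hsub

lemma LOn_le (n : ℕ) (x : ℕ → Bool) : LOn n x ≤ n :=
  le_trans (Finset.card_filter_le _ _) (le_of_eq (Finset.card_range n))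

lemma LOn_spec (n : ℕ) (x : ℕ → Bool) :
    (∀ s < LOn n x, x s = true) ∧ (LOn n x < n → x (LOn n x) = false) := by
  by_cases h : ∃ s, s < n ∧ x s = false
  · have hfs := Nat.find_spec h
    have hL : LOn n x = Nat.find h := by
      apply LOn_eq_of (le_of_lt hfs.1)
      · intro s hs
        cases hxs : x s with
        | true => rfl
        | false => exact absurd ⟨lt_trans hs hfs.1, hxs⟩ (Nat.find_min h hs)
      · intro _; exact hfs.2
    rw [hL]
    refine ⟨?_, fun _ => hfs.2⟩
    intro s hs
    cases hxs : x s with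
    | true => rfl
    | false => exact absurd ⟨lt_trans hs hfs.1, hxs⟩ (Nat.find_min h hs)
  · push_neg at h
    have hall : ∀ s < n, x s = true := by
      intro s hs
      cases hxs : x s with
      | true => rfl
      | false => exact absurd hxs (h s hs)
    have hL : LOn n x = n := LOn_eq_of le_rfl hall (fun h' => absurd h' (lt_irrefl n))
    rw [hL]
    exact ⟨hall, fun h' => absurd h' (lt_irrefl n)⟩

lemma LOn_lt (hno : ¬ ∀ i < n, x i = true) : LOn n x < n := by
  rcases lt_or_eq_of_le (LOn_le n x) with h | h
  · exact h
  · exact absurd (fun i hi => (LOn_spec n x).1 i (by omega)) hno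

lemma LOn_update_lt {j : ℕ} (hj : j < LOn n x) :
    LOn n (Function.update x j false) = j := by
  apply LOn_eq_of (le_trans (le_of_lt hj) (LOn_le n x))
  · intro s hs
    rw [Function.update_of_ne (Nat.ne_of_lt hs)]
    exact (LOn_spec n x).1 s (lt_trans hs hj)
  · intro _
    rw [Function.update_self]

lemma LOn_update_gt {j : ℕ} (b : Bool) (hj : LOn n x < j) :
    LOn n (Function.update x j b) = LOn n x := by
  apply LOn_eq_of (LOn_le n x)
  · intro s hs
    rw [Function.update_of_ne (by omega)]
    exact (LOn_spec n x).1 s hs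
  · intro h
    rw [Function.update_of_ne (by omega)]
    exact (LOn_spec n x).2 h

lemma DLBn_eq (hno : ¬ ∀ i < n, x i = true) :
    DLBn n x = if LOn n x % 2 = 1 then LOn n x - 1
      else if x (LOn n x + 1) = false then LOn n x + 1 else LOn n x := by
  have hLn : LOn n x < n := LOn_lt hno
  have h1 := (LOn_spec n x).1
  have hF := (LOn_spec n x).2 hLn
  unfold DLBn
  rw [if_neg hno]
  by_cases hpar : LOn n x % 2 = 1
  · rw [if_pos hpar]
    have h2 : 2 * (LOn n x / 2) = LOn n x - 1 := by omega
    rw [h2]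
    have htr : x (LOn n x - 1) = true := h1 _ (by omega)
    rw [if_neg (by simp [htr])]
  · rw [if_neg hpar]
    have h2 : 2 * (LOn n x / 2) = LOn n x := by omega
    rw [h2]
    by_cases hx1 : x (LOn n x + 1) = false
    · rw [if_pos ⟨hF, hx1⟩, if_pos hx1]
    · rw [if_neg (fun h => hx1 h.2), if_neg hx1]

end LOnLemmas
section Psi

/-- The scaled potential value as a function of the DLB value. -/
def psi (n d : ℕ) : ℕ :=
  if n ≤ d then 0 else if d % 2 = 1 then 2*n*(n-d+1) else 2*n*(n-d) - n

lemma psi_odd {n d : ℕ} (h : d < n) (hd : d % 2 = 1) :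
    psi n d = 2*n*(n-d+1) := by
  unfold psi; rw [if_neg (not_le.2 h), if_pos hd]

lemma psi_even {n d : ℕ} (h : d < n) (hd : d % 2 = 0) :
    psi n d = 2*n*(n-d) - n := by
  unfold psi; rw [if_neg (not_le.2 h), if_neg (by omega)]

lemma psi_top {n d : ℕ} (h : n ≤ d) : psi n d = 0 := by
  unfold psi; rw [if_pos h]

lemma psi_succ {n d : ℕ} (hd : d % 2 = 0) (h : d + 1 < n) :
    psi n d + n = psi n (d + 1) := by
  rw [psi_even (by omega) hd, psi_odd h (by omega)]
  have h1 : n - (d+1) + 1 = n - d := by omega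
  rw [h1]
  have h2 : n ≤ 2*n*(n-d) := by
    calc n ≤ 2*n*1 := by omega
      _ ≤ 2*n*(n-d) := Nat.mul_le_mul_left _ (by omega)
  omega

lemma psi_drop {n d d' : ℕ} (hd : d % 2 = 0) (h2 : d + 2 ≤ n) (h' : d + 2 ≤ d') :
    psi n d' + 3*n ≤ psi n d := by
  have hA : 2*n*(n-d) = 2*n*(n-d-2) + 4*n := by
    obtain ⟨k, hk⟩ : ∃ k, n - d = k + 2 := ⟨n - d - 2, by omega⟩
    rw [hk, Nat.mul_add, Nat.add_sub_cancel]
    omega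
  have hpd : psi n d = 2*n*(n-d) - n := psi_even (by omega) hd
  rcases le_or_gt n d' with hnd' | hnd'
  · rw [psi_top hnd']
    omega
  · by_cases hpar : d' % 2 = 1
    · rw [psi_odd hnd' hpar]
      have hle : 2*n*(n-d'+1) ≤ 2*n*(n-d-2) :=
        Nat.mul_le_mul_left _ (by omega)
      omega
    · rw [psi_even hnd' (by omega)]
      have hle : 2*n*(n-d') ≤ 2*n*(n-d-2) :=
        Nat.mul_le_mul_left _ (by omega)
      omega

lemma psi_le (n d : ℕ) : psi n d ≤ 2*n*n := by
  unfold psi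
  split_ifs with h h1
  · exact Nat.zero_le _
  · have := Nat.mul_le_mul_left (2*n) (show n - d + 1 ≤ n by omega)
    omega
  · have := Nat.mul_le_mul_left (2*n) (show n - d ≤ n by omega)
    omega

lemma psi_ge {n d : ℕ} (hd : d % 2 = 0) (h2 : d + 2 ≤ n) : 3*n ≤ psi n d := by
  rw [psi_even (by omega) hd]
  have : 2*n*2 ≤ 2*n*(n-d) := Nat.mul_le_mul_left _ (by omega)
  omega

end Psi
section Core

/-- The outcome of proposing a flip of bit `j` (accept/reject), at the level of
functions on `ℕ`. -/
def flipStep (n : ℕ) (x : ℕ → Bool) (j : ℕ) : ℕ → Bool :=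
  if (Even (DLBn n x) ∧ DLBn n x < DLBn n (Function.update x j (!x j))) ∨
      (¬ Even (DLBn n x) ∧
        (DLBn n x : ℤ) - 2 < (DLBn n (Function.update x j (!x j)) : ℤ))
    then Function.update x j (!x j) else x

variable {n : ℕ} {x : ℕ → Bool}

/-- After flipping a leading one at position `j`, the DLB value is at most
`j+1`, and at most `j-1` when `j` is odd. -/
lemma DLB_update_lt {j : ℕ} (hj : j < LOn n x) :
    DLBn n (Function.update x j false) ≤ j + 1 ∧
      (j % 2 = 1 → DLBn n (Function.update x j false) + 1 ≤ j) := by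
  have hjn : j < n := lt_of_lt_of_le hj (LOn_le n x)
  have hLy : LOn n (Function.update x j false) = j := LOn_update_lt hj
  have hyno : ¬ ∀ i < n, (Function.update x j false) i = true := by
    intro h
    have := h j hjn
    rw [Function.update_self] at this
    exact Bool.false_ne_true this
  rw [DLBn_eq hyno, hLy]
  split_ifs <;> omega

lemma DLB_ge {k : ℕ} (hk : k % 2 = 0) (h : k ≤ LOn n x) : k ≤ DLBn n x := by
  by_cases hall : ∀ i < n, x i = true
  · unfold DLBn
    rw [if_pos hall]
    exact le_trans h (LOn_le n x)
  · rw [DLBn_eq hall]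
    split_ifs <;> omega

lemma sum_reduce {n : ℕ} (hn2 : 2 ≤ n) (g : ℕ → ℕ) (c : ℕ) (a b : ℕ)
    (ha : a < n) (hb : b < n) (hab : a ≠ b)
    (hother : ∀ j < n, j ≠ a → j ≠ b → g j = c)
    (hspec : g a + g b + 2 * n ≤ 2 * c) :
    (∑ j ∈ Finset.range n, g j) + 2 * n ≤ n * c := by
  classical
  have hbmem : b ∈ (Finset.range n).erase a :=
    Finset.mem_erase.2 ⟨Ne.symm hab, Finset.mem_range.2 hb⟩
  have hsum : ∑ j ∈ Finset.range n, g j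
      = g a + (g b + ∑ j ∈ ((Finset.range n).erase a).erase b, g j) := by
    rw [← Finset.add_sum_erase _ _ (Finset.mem_range.2 ha), ← Finset.add_sum_erase _ _ hbmem]
  have hcard : (((Finset.range n).erase a).erase b).card = n - 2 := by
    rw [Finset.card_erase_of_mem hbmem, Finset.card_erase_of_mem (Finset.mem_range.2 ha),
      Finset.card_range]
    omega
  have hconst : ∑ j ∈ ((Finset.range n).erase a).erase b, g j = (n - 2) * c := by
    rw [Finset.sum_congr rfl (fun j hj => ?_), Finset.sum_const, hcard, smul_eq_mul]
    have hj1 := Finset.mem_erase.1 hj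
    have hj2 := Finset.mem_erase.1 hj1.2
    exact hother j (Finset.mem_range.1 hj2.2) hj2.1 hj1.1
  have hnc : (n - 2) * c + 2 * c = n * c := by
    rw [← Nat.add_mul, Nat.sub_add_cancel hn2]
  omega

end Core
section Main

variable {n : ℕ} {x : ℕ → Bool}

lemma not_allones_of_false {j : ℕ} (hj : j < n) (hxj : x j = false) :
    ¬ ∀ i < n, x i = true := by
  intro h
  have := h j hj
  rw [hxj] at this
  exact Bool.false_ne_true this

lemma main_sum (hn2 : 2 ≤ n) (hne : n % 2 = 0)
    (hno : ¬ ∀ i < n, x i = true) :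
    (∑ j ∈ Finset.range n, psi n (DLBn n (flipStep n x j))) + 2 * n
      ≤ n * psi n (DLBn n x) := by
  have hLn : LOn n x < n := LOn_lt hno
  have hxtrue : ∀ s < LOn n x, x s = true := (LOn_spec n x).1
  have hxF : x (LOn n x) = false := (LOn_spec n x).2 hLn
  set L := LOn n x with hLdef
  have hbL : (!x L) = true := by rw [hxF]; rfl
  by_cases hpar : L % 2 = 1
  · -- Case A : L odd, DLB x = L - 1 (critical block "10")
    have hDLB : DLBn n x = L - 1 := by rw [DLBn_eq hno, if_pos hpar]
    apply sum_reduce hn2 _ (psi n (DLBn n x)) L (L-1) hLn (by omega) (by omega)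
    · -- other indices : rejected
      intro j hjn hja hjb
      have hnot : ¬ ((Even (DLBn n x) ∧
            DLBn n x < DLBn n (Function.update x j (!x j))) ∨
          (¬ Even (DLBn n x) ∧
            (DLBn n x : ℤ) - 2 < (DLBn n (Function.update x j (!x j)) : ℤ))) := by
        rcases Nat.lt_or_ge j L with hjL | hjL
        · -- j < L - 1
          have hb1 : (!x j) = false := by rw [hxtrue j hjL]; rfl
          rw [hb1, hDLB]
          have hD := (DLB_update_lt (show j < L from hjL)).1
          rintro (⟨_, hlt⟩ | ⟨hodd, _⟩)
          · omega
          · exact hodd (Nat.even_iff.mpr (by omega))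
        · -- j > L
          have hjgt : L < j := by omega
          have hyL : LOn n (Function.update x j (!x j)) = L := LOn_update_gt _ hjgt
          have hyno : ¬ ∀ i < n, Function.update x j (!x j) i = true := by
            apply not_allones_of_false hLn
            rw [Function.update_of_ne (by omega)]
            exact hxF
          have hDy : DLBn n (Function.update x j (!x j)) = L - 1 := by
            rw [DLBn_eq hyno, hyL, if_pos hpar]
          rw [hDy, hDLB]
          rintro (⟨_, hlt⟩ | ⟨hodd, _⟩)
          · omega
          · exact hodd (Nat.even_iff.mpr (by omega))
      have hfs : flipStep n x j = x := by unfold flipStep; rw [if_neg hnot]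
      rw [hfs]
    · -- the two special indices
      -- index L : flip the `false` right after the leading ones
      have hyge : L + 1 ≤ LOn n (Function.update x L (!x L)) := by
        apply le_LOn_of (by omega)
        intro s hs
        rcases Nat.lt_or_ge s L with h | h
        · rw [Function.update_of_ne (by omega)]
          exact hxtrue s h
        · have hsL : s = L := by omega
          rw [hsL, Function.update_self]
          exact hbL
      have hDgeA : L + 1 ≤ DLBn n (Function.update x L (!x L)) :=
        DLB_ge (by omega) hyge
      have haccA : ((Even (DLBn n x) ∧
            DLBn n x < DLBn n (Function.update x L (!x L))) ∨
          (¬ Even (DLBn n x) ∧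
            (DLBn n x : ℤ) - 2 < (DLBn n (Function.update x L (!x L)) : ℤ))) := by
        left
        rw [hDLB]
        exact ⟨Nat.even_iff.mpr (by omega), by omega⟩
      have hgA : psi n (DLBn n (flipStep n x L)) + 3*n ≤ psi n (DLBn n x) := by
        unfold flipStep
        rw [if_pos haccA, hDLB]
        exact psi_drop (by omega) (by omega) (by omega)
      -- index L - 1 : flip the last leading one
      have hb1 : (!x (L-1)) = false := by rw [hxtrue (L-1) (by omega)]; rfl
      have hyno : ¬ ∀ i < n, Function.update x (L-1) (!x (L-1)) i = true := by
        apply not_allones_of_false hLn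
        rw [Function.update_of_ne (by omega)]
        exact hxF
      have hyLb : LOn n (Function.update x (L-1) (!x (L-1))) = L - 1 := by
        rw [hb1]
        exact LOn_update_lt (by omega)
      have hDyb : DLBn n (Function.update x (L-1) (!x (L-1))) = L := by
        rw [DLBn_eq hyno, hyLb, if_neg (by omega)]
        have h1 : L - 1 + 1 = L := by omega
        rw [h1, Function.update_of_ne (by omega), if_pos hxF]
      have haccB : ((Even (DLBn n x) ∧
            DLBn n x < DLBn n (Function.update x (L-1) (!x (L-1)))) ∨
          (¬ Even (DLBn n x) ∧
            (DLBn n x : ℤ) - 2 <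
              (DLBn n (Function.update x (L-1) (!x (L-1))) : ℤ))) := by
        left
        rw [hDLB, hDyb]
        exact ⟨Nat.even_iff.mpr (by omega), by omega⟩
      have hgB : psi n (DLBn n (flipStep n x (L-1))) = psi n L := by
        unfold flipStep
        rw [if_pos haccB, hDyb]
      have hsucc : psi n (L-1) + n = psi n L := by
        have := psi_succ (n := n) (d := L-1) (by omega) (by omega)
        have h1 : L - 1 + 1 = L := by omega
        rwa [h1] at this
      rw [hgB, hDLB] at *
      omega
  · -- L even
    have hL2 : L + 2 ≤ n := by omega
    by_cases hx1 : x (L+1) = false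
    · -- Case C : critical block "00", DLB x = L + 1
      have hDLB : DLBn n x = L + 1 := by
        rw [DLBn_eq hno, if_neg hpar, if_pos hx1]
      have hnotE : ¬ Even (DLBn n x) := by
        rw [hDLB, Nat.even_iff]
        omega
      apply sum_reduce hn2 _ (psi n (DLBn n x)) L (L+1) hLn (by omega) (by omega)
      · -- other indices
        intro j hjn hja hjb
        rcases Nat.lt_or_ge j L with hjL | hjL
        · -- j < L : rejected
          have hb1 : (!x j) = false := by rw [hxtrue j hjL]; rfl
          have hnot : ¬ ((Even (DLBn n x) ∧
                DLBn n x < DLBn n (Function.update x j (!x j))) ∨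
              (¬ Even (DLBn n x) ∧
                (DLBn n x : ℤ) - 2 <
                  (DLBn n (Function.update x j (!x j)) : ℤ))) := by
            rw [hb1]
            have hD := DLB_update_lt (show j < L from hjL)
            rintro (⟨hev, _⟩ | ⟨_, hlt⟩)
            · exact hnotE hev
            · rw [hDLB] at hlt
              -- DLB y ≤ L - 1
              have hDy : DLBn n (Function.update x j false) + 1 ≤ L := by
                rcases Nat.even_or_odd j with hje | hjo
                · have : j + 2 ≤ L := by
                    rw [Nat.even_iff] at hje
                    omega
                  omega
                · rw [Nat.odd_iff] at hjo
                  have := hD.2 hjo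
                  omega
              have : ((DLBn n (Function.update x j false) : ℤ)) ≤ (L : ℤ) - 1 := by
                exact_mod_cast by omega
              omega
          have hfs : flipStep n x j = x := by unfold flipStep; rw [if_neg hnot]
          rw [hfs]
        · -- j > L + 1 : DLB unchanged whether accepted or not
          have hjgt : L + 1 < j := by omega
          have hyL : LOn n (Function.update x j (!x j)) = L :=
            LOn_update_gt _ (by omega)
          have hyno : ¬ ∀ i < n, Function.update x j (!x j) i = true := by
            apply not_allones_of_false hLn
            rw [Function.update_of_ne (by omega)]
            exact hxF
          have hDy : DLBn n (Function.update x j (!x j)) = L + 1 := by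
            rw [DLBn_eq hyno, hyL, if_neg hpar,
              if_pos (by rw [Function.update_of_ne (by omega)]; exact hx1)]
          unfold flipStep
          split_ifs with h
          · rw [hDy]
            rw [hDLB]
          · rfl
      · -- special indices L and L + 1 : both give DLB = L
        have hgA : psi n (DLBn n (flipStep n x L)) = psi n L := by
          have hyLa : LOn n (Function.update x L (!x L)) = L + 1 := by
            apply LOn_eq_of (by omega)
            · intro s hs
              rcases Nat.lt_or_ge s L with h | h
              · rw [Function.update_of_ne (by omega)]
                exact hxtrue s h
              · have hsL : s = L := by omega
                rw [hsL, Function.update_self]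
                exact hbL
            · intro _
              rw [Function.update_of_ne (by omega)]
              exact hx1
          have hyno : ¬ ∀ i < n, Function.update x L (!x L) i = true := by
            apply not_allones_of_false (show L + 1 < n by omega)
            rw [Function.update_of_ne (by omega)]
            exact hx1
          have hDy : DLBn n (Function.update x L (!x L)) = L := by
            rw [DLBn_eq hyno, hyLa, if_pos (by omega)]
            omega
          have hacc : ((Even (DLBn n x) ∧
                DLBn n x < DLBn n (Function.update x L (!x L))) ∨
              (¬ Even (DLBn n x) ∧
                (DLBn n x : ℤ) - 2 <
                  (DLBn n (Function.update x L (!x L)) : ℤ))) := by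
            right
            refine ⟨hnotE, ?_⟩
            rw [hDLB, hDy]
            push_cast
            omega
          unfold flipStep
          rw [if_pos hacc, hDy]
        have hgB : psi n (DLBn n (flipStep n x (L+1))) = psi n L := by
          have hb1 : (!x (L+1)) = true := by rw [hx1]; rfl
          have hyLb : LOn n (Function.update x (L+1) (!x (L+1))) = L :=
            LOn_update_gt _ (by omega)
          have hyno : ¬ ∀ i < n, Function.update x (L+1) (!x (L+1)) i = true := by
            apply not_allones_of_false hLn
            rw [Function.update_of_ne (by omega)]
            exact hxF
          have hDy : DLBn n (Function.update x (L+1) (!x (L+1))) = L := by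
            rw [DLBn_eq hyno, hyLb, if_neg hpar,
              if_neg (by rw [Function.update_self, hb1]; simp)]
          have hacc : ((Even (DLBn n x) ∧
                DLBn n x < DLBn n (Function.update x (L+1) (!x (L+1)))) ∨
              (¬ Even (DLBn n x) ∧
                (DLBn n x : ℤ) - 2 <
                  (DLBn n (Function.update x (L+1) (!x (L+1))) : ℤ))) := by
            right
            refine ⟨hnotE, ?_⟩
            rw [hDLB, hDy]
            push_cast
            omega
          unfold flipStep
          rw [if_pos hacc, hDy]
        have hsucc : psi n L + n = psi n (L+1) := psi_succ (by omega) (by omega)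
        rw [hgA, hgB, hDLB]
        omega
    · -- Case B : critical block "01", DLB x = L
      have hx1t : x (L+1) = true := by
        cases h : x (L+1) with
        | true => rfl
        | false => exact absurd h hx1
      have hDLB : DLBn n x = L := by
        rw [DLBn_eq hno, if_neg hpar, if_neg hx1]
      have hE : Even (DLBn n x) := by
        rw [hDLB]
        exact Nat.even_iff.mpr (by omega)
      apply sum_reduce hn2 _ (psi n (DLBn n x)) L (L+1) hLn (by omega) (by omega)
      · -- other indices : rejected
        intro j hjn hja hjb
        have hnot : ¬ ((Even (DLBn n x) ∧
              DLBn n x < DLBn n (Function.update x j (!x j))) ∨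
            (¬ Even (DLBn n x) ∧
              (DLBn n x : ℤ) - 2 <
                (DLBn n (Function.update x j (!x j)) : ℤ))) := by
          rcases Nat.lt_or_ge j L with hjL | hjL
          · -- j < L
            have hb1 : (!x j) = false := by rw [hxtrue j hjL]; rfl
            rw [hb1, hDLB]
            have hD := (DLB_update_lt (show j < L from hjL)).1
            rintro (⟨_, hlt⟩ | ⟨hodd, _⟩)
            · omega
            · exact hodd (Nat.even_iff.mpr (by omega))
          · -- j > L + 1
            have hjgt : L + 1 < j := by omega
            have hyL : LOn n (Function.update x j (!x j)) = L :=
              LOn_update_gt _ (by omega)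
            have hyno : ¬ ∀ i < n, Function.update x j (!x j) i = true := by
              apply not_allones_of_false hLn
              rw [Function.update_of_ne (by omega)]
              exact hxF
            have hDy : DLBn n (Function.update x j (!x j)) = L := by
              rw [DLBn_eq hyno, hyL, if_neg hpar,
                if_neg (by rw [Function.update_of_ne (by omega)]; simp [hx1t])]
            rw [hDy, hDLB]
            rintro (⟨_, hlt⟩ | ⟨hodd, _⟩)
            · omega
            · exact hodd (Nat.even_iff.mpr (by omega))
        have hfs : flipStep n x j = x := by unfold flipStep; rw [if_neg hnot]
        rw [hfs]
      · -- special indices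
        -- index L : completes the block, DLB ≥ L + 2
        have hyge : L + 2 ≤ LOn n (Function.update x L (!x L)) := by
          apply le_LOn_of (by omega)
          intro s hs
          rcases Nat.lt_or_ge s L with h | h
          · rw [Function.update_of_ne (by omega)]
            exact hxtrue s h
          · rcases Nat.eq_or_lt_of_le h with h' | h'
            · rw [← h', Function.update_self]
              exact hbL
            · have hsL : s = L + 1 := by omega
              rw [hsL, Function.update_of_ne (by omega)]
              exact hx1t
        have hDgeA : L + 2 ≤ DLBn n (Function.update x L (!x L)) :=
          DLB_ge (by omega) hyge
        have haccA : ((Even (DLBn n x) ∧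
              DLBn n x < DLBn n (Function.update x L (!x L))) ∨
            (¬ Even (DLBn n x) ∧
              (DLBn n x : ℤ) - 2 <
                (DLBn n (Function.update x L (!x L)) : ℤ))) := by
          left
          rw [hDLB]
          exact ⟨Nat.even_iff.mpr (by omega), by omega⟩
        have hgA : psi n (DLBn n (flipStep n x L)) + 3*n ≤ psi n (DLBn n x) := by
          unfold flipStep
          rw [if_pos haccA, hDLB]
          exact psi_drop (by omega) (by omega) (by omega)
        -- index L + 1 : destroys the one in the block, DLB = L + 1
        have hb1 : (!x (L+1)) = false := by rw [hx1t]; rfl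
        have hyLb : LOn n (Function.update x (L+1) (!x (L+1))) = L :=
          LOn_update_gt _ (by omega)
        have hyno : ¬ ∀ i < n, Function.update x (L+1) (!x (L+1)) i = true := by
          apply not_allones_of_false hLn
          rw [Function.update_of_ne (by omega)]
          exact hxF
        have hDyb : DLBn n (Function.update x (L+1) (!x (L+1))) = L + 1 := by
          rw [DLBn_eq hyno, hyLb, if_neg hpar,
            if_pos (by rw [Function.update_self, hb1])]
        have haccB : ((Even (DLBn n x) ∧
              DLBn n x < DLBn n (Function.update x (L+1) (!x (L+1)))) ∨
            (¬ Even (DLBn n x) ∧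
              (DLBn n x : ℤ) - 2 <
                (DLBn n (Function.update x (L+1) (!x (L+1))) : ℤ))) := by
          left
          rw [hDLB, hDyb]
          exact ⟨Nat.even_iff.mpr (by omega), by omega⟩
        have hgB : psi n (DLBn n (flipStep n x (L+1))) = psi n (L+1) := by
          unfold flipStep
          rw [if_pos haccB, hDyb]
        have hsucc : psi n L + n = psi n (L+1) := psi_succ (by omega) (by omega)
        rw [hgB, hDLB] at *
        omega

end Main
section Bridge

variable {n : ℕ}

lemma toNatFun_lt (z : Fin n → Bool) (i : Fin n) : toNatFun z (i : ℕ) = z i := by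
  simp [toNatFun]

lemma toNatFun_update (z : Fin n → Bool) (i : Fin n) (b : Bool) :
    toNatFun (Function.update z i b) = Function.update (toNatFun z) (i : ℕ) b := by
  funext j
  unfold toNatFun
  by_cases hj : j < n
  · rw [dif_pos hj]
    by_cases hij : j = (i : ℕ)
    · have h1 : (⟨j, hj⟩ : Fin n) = i := Fin.ext hij
      rw [Function.update_apply, if_pos h1, hij, Function.update_self]
    · have h1 : (⟨j, hj⟩ : Fin n) ≠ i := fun h => hij (congrArg Fin.val h)
      rw [Function.update_of_ne h1, Function.update_of_ne hij, dif_pos hj]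
  · rw [dif_neg hj]
    have hji : j ≠ (i : ℕ) := by have := i.isLt; omega
    rw [Function.update_of_ne hji, dif_neg hj]

lemma flip_bridge (z : Fin n → Bool) (i : Fin n) :
    DLB (if (Even (DLB z) ∧ DLB z < DLB (Function.update z i (!(z i)))) ∨
        (¬ Even (DLB z) ∧
          (DLB z : ℤ) - 2 < (DLB (Function.update z i (!(z i))) : ℤ))
      then Function.update z i (!(z i)) else z)
    = DLBn n (flipStep n (toNatFun z) (i : ℕ)) := by
  have hbv : (!(toNatFun z (i : ℕ))) = (!(z i)) := by rw [toNatFun_lt]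
  have key : DLB (Function.update z i (!(z i)))
      = DLBn n (Function.update (toNatFun z) (i : ℕ) (!(toNatFun z (i : ℕ)))) := by
    unfold DLB
    rw [toNatFun_update, hbv]
  have hDz : DLB z = DLBn n (toNatFun z) := rfl
  have hiff : ((Even (DLB z) ∧ DLB z < DLB (Function.update z i (!(z i)))) ∨
      (¬ Even (DLB z) ∧
        (DLB z : ℤ) - 2 < (DLB (Function.update z i (!(z i))) : ℤ)))
      ↔ ((Even (DLBn n (toNatFun z)) ∧ DLBn n (toNatFun z) <
            DLBn n (Function.update (toNatFun z) (i : ℕ) (!(toNatFun z (i : ℕ))))) ∨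
        (¬ Even (DLBn n (toNatFun z)) ∧
          (DLBn n (toNatFun z) : ℤ) - 2 <
            (DLBn n (Function.update (toNatFun z) (i : ℕ)
              (!(toNatFun z (i : ℕ)))) : ℤ))) := by
    rw [key]
    exact Iff.rfl
  unfold flipStep
  by_cases h : (Even (DLBn n (toNatFun z)) ∧ DLBn n (toNatFun z) <
        DLBn n (Function.update (toNatFun z) (i : ℕ) (!(toNatFun z (i : ℕ))))) ∨
      (¬ Even (DLBn n (toNatFun z)) ∧
        (DLBn n (toNatFun z) : ℤ) - 2 <
          (DLBn n (Function.update (toNatFun z) (i : ℕ)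
            (!(toNatFun z (i : ℕ)))) : ℤ))
  · rw [if_pos (hiff.mpr h), if_pos h]
    exact key
  · rw [if_neg (fun hh => h (hiff.mp hh)), if_neg h]
    exact hDz

end Bridge
section PMFLayer

variable {n : ℕ} [NeZero n]

/-- The potential function (an `ℝ≥0∞`-valued version of `2n(n - HLB_{3/2})`). -/
noncomputable def Phi (n : ℕ) (z : Fin n → Bool) : ENNReal := (psi n (DLB z) : ENNReal)

lemma Phi_ones : Phi n (fun _ => true) = 0 := by
  unfold Phi DLB DLBn
  rw [if_pos (fun i hi => by simp [toNatFun, hi])]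
  rw [psi_top le_rfl]
  simp

lemma Phi_le : Phi n z ≤ 2 * (n : ENNReal) * n := by
  unfold Phi
  calc (psi n (DLB z) : ENNReal) ≤ ((2*n*n : ℕ) : ENNReal) := by
        exact_mod_cast psi_le n (DLB z)
    _ = 2 * (n : ENNReal) * n := by push_cast; ring

lemma sbf_inner (he : Even n) (z : Fin n → Bool) (hz : z ≠ fun _ => true) :
    (∑ y : Fin n → Bool, sbfStep n z y * Phi n y) + 2 ≤ Phi n z := by
  classical
  have hn0 : (n : ENNReal) ≠ 0 := Nat.cast_ne_zero.mpr (NeZero.ne n)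
  have hnt : (n : ENNReal) ≠ ⊤ := ENNReal.natCast_ne_top n
  set f : Fin n → (Fin n → Bool) := fun i =>
    if (Even (DLB z) ∧ DLB z < DLB (Function.update z i (!(z i)))) ∨
        (¬ Even (DLB z) ∧
          (DLB z : ℤ) - 2 < (DLB (Function.update z i (!(z i))) : ℤ))
      then Function.update z i (!(z i)) else z with hf
  have hmap : ∀ y, sbfStep n z y
      = ∑ i : Fin n, (if y = f i then (n : ENNReal)⁻¹ else 0) := by
    intro y
    unfold sbfStep
    rw [PMF.map_apply, tsum_fintype]
    congr 1
    funext i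
    rw [PMF.uniformOfFintype_apply, Fintype.card_fin]
    simp only [hf]
    split_ifs <;> tauto
  have hsum : (∑ y : Fin n → Bool, sbfStep n z y * Phi n y)
      = (n : ENNReal)⁻¹ * ∑ i : Fin n, Phi n (f i) := by
    rw [Finset.mul_sum]
    rw [Finset.sum_congr rfl (fun y _ => by rw [hmap y, Finset.sum_mul])]
    rw [Finset.sum_comm]
    congr 1
    funext i
    simp only [ite_mul, zero_mul]
    rw [Finset.sum_ite_eq' Finset.univ (f i) (fun y => (n : ENNReal)⁻¹ * Phi n y),
      if_pos (Finset.mem_univ _)]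
  have hno : ¬ ∀ j < n, toNatFun z j = true := by
    intro h
    apply hz
    funext i
    rw [← toNatFun_lt z i]
    exact h i i.isLt
  have hkey : (∑ j ∈ Finset.range n, psi n (DLBn n (flipStep n (toNatFun z) j)))
      + 2 * n ≤ n * psi n (DLBn n (toNatFun z)) := by
    apply main_sum ?_ (Nat.even_iff.mp he) hno
    have h1 : 1 ≤ n := Nat.one_le_iff_ne_zero.mpr (NeZero.ne n)
    rcases Nat.even_iff.mp he with h
    omega
  have hPhif : ∀ i : Fin n, Phi n (f i)
      = ((psi n (DLBn n (flipStep n (toNatFun z) (i : ℕ))) : ℕ) : ENNReal) := by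
    intro i
    unfold Phi
    rw [hf]
    exact congrArg _ (congrArg _ (flip_bridge z i))
  have hsum2 : (∑ i : Fin n, Phi n (f i))
      = (((∑ j ∈ Finset.range n, psi n (DLBn n (flipStep n (toNatFun z) j))) : ℕ)
          : ENNReal) := by
    rw [Finset.sum_congr rfl (fun i _ => hPhif i), Nat.cast_sum]
    exact Fin.sum_univ_eq_sum_range (fun j =>
      ((psi n (DLBn n (flipStep n (toNatFun z) j)) : ℕ) : ENNReal)) n
  -- cast the key inequality
  have hkey' : (∑ i : Fin n, Phi n (f i)) + 2 * (n : ENNReal) ≤ (n : ENNReal) * Phi n z := by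
    rw [hsum2]
    unfold Phi
    calc ((∑ j ∈ Finset.range n, psi n (DLBn n (flipStep n (toNatFun z) j)) : ℕ) : ENNReal)
          + 2 * (n : ENNReal)
        = (((∑ j ∈ Finset.range n, psi n (DLBn n (flipStep n (toNatFun z) j)))
            + 2 * n : ℕ) : ENNReal) := by push_cast; ring
      _ ≤ ((n * psi n (DLBn n (toNatFun z)) : ℕ) : ENNReal) := Nat.cast_le.mpr hkey
      _ = (n : ENNReal) * ((psi n (DLBn n (toNatFun z)) : ℕ) : ENNReal) := by
            push_cast; ring
  rw [hsum]
  have h2 : (2 : ENNReal) = (n : ENNReal)⁻¹ * (2 * n) := by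
    rw [mul_comm 2 (n : ENNReal), ← mul_assoc, ENNReal.inv_mul_cancel hn0 hnt, one_mul]
  rw [h2, ← mul_add]
  calc (n : ENNReal)⁻¹ * ((∑ i : Fin n, Phi n (f i)) + 2 * n)
      ≤ (n : ENNReal)⁻¹ * ((n : ENNReal) * Phi n z) := mul_le_mul_right hkey' _
    _ = Phi n z := by rw [← mul_assoc, ENNReal.inv_mul_cancel hn0 hnt, one_mul]

end PMFLayer
section Final

variable {n : ℕ} [NeZero n]

lemma pure_exp (z : Fin n → Bool) :
    (∑ y : Fin n → Bool, (PMF.pure z) y * Phi n y) = Phi n z := by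
  classical
  simp [PMF.pure_apply, ite_mul]

lemma step_drift (he : Even n) (p : PMF (Fin n → Bool)) :
    (∑ y : Fin n → Bool,
        (p.bind (fun x => if x = (fun _ => true) then PMF.pure x else sbfStep n x)) y
          * Phi n y)
      + 2 * (1 - p (fun _ => true))
      ≤ ∑ z : Fin n → Bool, p z * Phi n z := by
  classical
  set stp : (Fin n → Bool) → PMF (Fin n → Bool) :=
    fun x => if x = (fun _ => true) then PMF.pure x else sbfStep n x with hstp
  have hswap : (∑ y : Fin n → Bool, (p.bind stp) y * Phi n y)
      = ∑ z : Fin n → Bool, p z * ∑ y : Fin n → Bool, stp z y * Phi n y := by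
    rw [Finset.sum_congr rfl (fun y _ => by
      rw [PMF.bind_apply, tsum_fintype, Finset.sum_mul])]
    rw [Finset.sum_comm]
    congr 1
    funext z
    rw [Finset.mul_sum]
    congr 1
    funext y
    ring
  have hinner : ∀ z : Fin n → Bool,
      (∑ y : Fin n → Bool, stp z y * Phi n y)
        + (if z = (fun _ => true) then 0 else 2) ≤ Phi n z := by
    intro z
    by_cases hz : z = (fun _ => true)
    · have hz' : stp z = PMF.pure z := by simp only [hstp]; rw [if_pos hz]
      rw [if_pos hz, hz', pure_exp, add_zero]
    · have hz' : stp z = sbfStep n z := by simp only [hstp]; rw [if_neg hz]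
      rw [if_neg hz, hz']
      exact sbf_inner he z hz
  have hprob : 2 * (1 - p (fun _ => true))
      ≤ ∑ z : Fin n → Bool, p z * (if z = (fun _ => true) then 0 else 2) := by
    have hone : (p (fun _ => true))
        + ∑ z ∈ Finset.univ.erase (fun _ => true), p z = 1 := by
      rw [Finset.add_sum_erase _ _ (Finset.mem_univ _), ← tsum_fintype (L := SummationFilter.unconditional _)]
      exact p.tsum_coe
    have h1 : (1 : ENNReal) - p (fun _ => true)
        ≤ ∑ z ∈ Finset.univ.erase (fun _ => true), p z := by
      rw [tsub_le_iff_left]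
      rw [hone]
    have h2 : ∑ z : Fin n → Bool, p z * (if z = (fun _ => true) then 0 else 2)
        = 2 * ∑ z ∈ Finset.univ.erase (fun _ => true), p z := by
      rw [← Finset.add_sum_erase _
        (fun z => p z * (if z = (fun _ => true) then 0 else 2)) (Finset.mem_univ _)]
      rw [if_pos rfl, mul_zero, zero_add, Finset.mul_sum]
      apply Finset.sum_congr rfl
      intro z hz
      rw [if_neg (Finset.mem_erase.1 hz).1]
      ring
    rw [h2]
    exact mul_le_mul_right h1 2
  calc (∑ y : Fin n → Bool, (p.bind stp) y * Phi n y) + 2 * (1 - p (fun _ => true))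
      ≤ (∑ z : Fin n → Bool, p z * ∑ y : Fin n → Bool, stp z y * Phi n y)
        + ∑ z : Fin n → Bool, p z * (if z = (fun _ => true) then 0 else 2) :=
        add_le_add (le_of_eq hswap) hprob
    _ = ∑ z : Fin n → Bool, p z * ((∑ y : Fin n → Bool, stp z y * Phi n y)
        + (if z = (fun _ => true) then 0 else 2)) := by
        rw [← Finset.sum_add_distrib]
        apply Finset.sum_congr rfl
        intro z _
        rw [mul_add]
    _ ≤ ∑ z : Fin n → Bool, p z * Phi n z :=
        Finset.sum_le_sum (fun z _ => mul_le_mul_right (hinner z) _)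

lemma telescope (he : Even n) (x0 : Fin n → Bool) (N : ℕ) :
    (∑ y : Fin n → Bool,
        (iterStep (fun x => if x = (fun _ => true) then PMF.pure x else sbfStep n x)
          N x0) y * Phi n y)
      + 2 * ∑ t ∈ Finset.range N,
          (1 - (iterStep (fun x => if x = (fun _ => true) then PMF.pure x else sbfStep n x)
            t x0) (fun _ => true))
      ≤ Phi n x0 := by
  induction N with
  | zero =>
      rw [Finset.sum_range_zero, mul_zero, add_zero]
      rw [show iterStep _ 0 x0 = PMF.pure x0 from rfl, pure_exp]
  | succ N ih =>
      rw [Finset.sum_range_succ, mul_add]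
      rw [show iterStep (fun x => if x = (fun _ => true) then PMF.pure x else sbfStep n x)
          (N+1) x0
        = (iterStep (fun x => if x = (fun _ => true) then PMF.pure x else sbfStep n x)
            N x0).bind
            (fun x => if x = (fun _ => true) then PMF.pure x else sbfStep n x) from rfl]
      calc _ ≤ ((∑ z : Fin n → Bool,
            (iterStep (fun x => if x = (fun _ => true) then PMF.pure x else sbfStep n x)
              N x0) z * Phi n z)
          + 2 * ∑ t ∈ Finset.range N,
            (1 - (iterStep (fun x => if x = (fun _ => true) then PMF.pure x else sbfStep n x)
              t x0) (fun _ => true))) := by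
            rw [add_comm (2 * ∑ t ∈ Finset.range N, _) _, ← add_assoc]
            exact add_le_add_left (step_drift he _) _
        _ ≤ Phi n x0 := ih

end Final

/-- **Quadratic runtime of the single-bit-flip non-elitist algorithm on DLB.**
Let `n` be an even positive integer. Consider the Markov chain on `{0,1}^n`
given by the single-bit-flip non-elitist transition rule. From any initial
state, the expected number of steps until the chain first reaches the optimum
`(1,…,1)` is at most `n²`. The expected hitting time is expressed as
`Σ_{t≥0} Pr[T > t]`, using the chain absorbed at the optimum (which has the same
first hitting time): `Pr[T > t]` is the probability that the absorbed chain is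
not at the optimum at time `t`. -/
theorem single_bit_flip_runtime_on_DLB (n : ℕ) [NeZero n] (he : Even n)
    (x0 : Fin n → Bool) :
    ∑' t : ℕ,
        (1 - iterStep
          (fun x => if x = (fun _ => true) then PMF.pure x else sbfStep n x)
          t x0 (fun _ => true))
      ≤ ((n : ENNReal)) ^ 2 := by
  classical
  have hN : ∀ N : ℕ,
      (∑ t ∈ Finset.range N,
        (1 - iterStep
          (fun x => if x = (fun _ => true) then PMF.pure x else sbfStep n x)
          t x0 (fun _ => true))) ≤ ((n : ENNReal)) ^ 2 := by
    intro N
    have h1 := telescope he x0 N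
    have h2 : 2 * (∑ t ∈ Finset.range N,
        (1 - iterStep
          (fun x => if x = (fun _ => true) then PMF.pure x else sbfStep n x)
          t x0 (fun _ => true))) ≤ Phi n x0 :=
      le_trans le_add_self h1
    have h3 : Phi n x0 ≤ 2 * ((n : ENNReal)) ^ 2 := by
      calc Phi n x0 ≤ 2 * (n : ENNReal) * n := Phi_le
        _ = 2 * ((n : ENNReal)) ^ 2 := by ring
    have h4 := le_trans h2 h3
    exact (ENNReal.mul_le_mul_iff_right (by norm_num) (by norm_num)).mp h4
  rw [ENNReal.tsum_eq_iSup_sum]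
  apply iSup_le
  intro s
  obtain ⟨N, hs⟩ := s.exists_nat_subset_range
  exact le_trans (Finset.sum_le_sum_of_subset hs) (hN N)
end

section
/- Winner-bit probability in the sig-cGA selection step: Let n be an even positive integer, m ∈ [0..n/2−1] an integer, and τ = (τ_1,…,τ_n) ∈ [0,1]^n a frequency vector. Let x and y be two independent random bit strings whose bits are independent with Pr[x_i = 1] = Pr[y_i = 1] = τ_i for all i. Let z be the winner of x and y with respect to DLB, i.e., z = x if DLB(x) > DLB(y), z = y if DLB(y) > DLB(x), and z is chosen uniformly at random from {x, y} if DLB(x) = DLB(y). Then, conditioning on the event {min{DLB(x), DLB(y)} ≥ 2m} (assumed to have positive probability), the probability that z_{2m+1} = 1 equals p(τ_{2m+1}, τ_{2m+2}) := τ_{2m+1}·(−τ_{2m+2}² + 3τ_{2m+2} + (τ_{2m+2}² − 3τ_{2m+2} + 1)·τ_{2m+1}). -/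
lemma LOn_eq {n : ℕ} (x : ℕ → Bool) (k : ℕ) (hk : k < n)
    (h1 : ∀ i < k, x i = true) (h2 : x k = false) : LOn n x = k := by
  unfold LOn
  have : (Finset.range n).filter (fun r => ∀ s ≤ r, x s = true) = Finset.range k := by
    ext r
    simp only [Finset.mem_filter, Finset.mem_range]
    constructor
    · rintro ⟨hrn, hall⟩
      by_contra hr
      push_neg at hr
      have := hall k hr
      rw [h2] at this
      exact Bool.false_ne_true this
    · intro hr
      exact ⟨lt_trans hr hk, fun s hs => h1 s (lt_of_le_of_lt hs hr)⟩
  rw [this, Finset.card_range]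

lemma LOn_ge {n : ℕ} (x : ℕ → Bool) (k : ℕ) (hk : k ≤ n)
    (h1 : ∀ i < k, x i = true) : k ≤ LOn n x := by
  unfold LOn
  have : Finset.range k ⊆ (Finset.range n).filter (fun r => ∀ s ≤ r, x s = true) := by
    intro r hr
    simp only [Finset.mem_range] at hr
    simp only [Finset.mem_filter, Finset.mem_range]
    exact ⟨lt_of_lt_of_le hr hk, fun s hs => h1 s (lt_of_le_of_lt hs hr)⟩
  calc k = (Finset.range k).card := (Finset.card_range k).symm
  _ ≤ _ := Finset.card_le_card this

lemma lt2m {n m : ℕ} (hm : 2 * m + 2 ≤ n) : 2 * m < n :=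
  Nat.lt_of_lt_of_le (Nat.lt_add_of_pos_right two_pos) hm

lemma lt2m1 {n m : ℕ} (hm : 2 * m + 2 ≤ n) : 2 * m + 1 < n :=
  Nat.lt_of_lt_of_le (Nat.lt_succ_self _) hm

section DLBfacts
variable {n m : ℕ} (hm : 2 * m + 2 ≤ n) (x : Fin n → Bool)
  (hpre : ∀ i : Fin n, (i : ℕ) < 2 * m → x i = true)

lemma toNatFun_lt_s15 {i : ℕ} (h : i < n) : toNatFun x i = x ⟨i, h⟩ := by
  simp [toNatFun, h]

include hm hpre

lemma DLB_00 (h0 : x ⟨2 * m, lt2m hm⟩ = false) (h1 : x ⟨2 * m + 1, lt2m1 hm⟩ = false) :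
    DLB x = 2 * m + 1 := by
  have hlo : LOn n (toNatFun x) = 2 * m := by
    apply LOn_eq _ _ (by omega)
    · intro i hi
      rw [toNatFun_lt_s15 x (by omega)]
      exact hpre _ hi
    · rw [toNatFun_lt_s15 x (by omega)]; exact h0
  have hnall : ¬ ∀ i < n, toNatFun x i = true := by
    intro h
    have := h (2 * m) (by omega)
    rw [toNatFun_lt_s15 x (by omega), h0] at this
    exact Bool.false_ne_true this
  unfold DLB DLBn
  rw [if_neg hnall, hlo]
  have h2 : 2 * (2 * m / 2) = 2 * m := by omega
  rw [h2, if_pos ⟨by rw [toNatFun_lt_s15 x (by omega)]; exact h0,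
    by rw [toNatFun_lt_s15 x (by omega)]; exact h1⟩]

lemma DLB_01 (h0 : x ⟨2 * m, lt2m hm⟩ = false) (h1 : x ⟨2 * m + 1, lt2m1 hm⟩ = true) :
    DLB x = 2 * m := by
  have hlo : LOn n (toNatFun x) = 2 * m := by
    apply LOn_eq _ _ (by omega)
    · intro i hi
      rw [toNatFun_lt_s15 x (by omega)]
      exact hpre _ hi
    · rw [toNatFun_lt_s15 x (by omega)]; exact h0
  have hnall : ¬ ∀ i < n, toNatFun x i = true := by
    intro h
    have := h (2 * m) (by omega)
    rw [toNatFun_lt_s15 x (by omega), h0] at this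
    exact Bool.false_ne_true this
  unfold DLB DLBn
  rw [if_neg hnall, hlo]
  have h2 : 2 * (2 * m / 2) = 2 * m := by omega
  rw [h2, if_neg]
  rintro ⟨-, hb⟩
  rw [toNatFun_lt_s15 x (by omega), h1] at hb
  simp at hb

lemma DLB_10 (h0 : x ⟨2 * m, lt2m hm⟩ = true) (h1 : x ⟨2 * m + 1, lt2m1 hm⟩ = false) :
    DLB x = 2 * m := by
  have hlo : LOn n (toNatFun x) = 2 * m + 1 := by
    apply LOn_eq _ _ (by omega)
    · intro i hi
      rw [toNatFun_lt_s15 x (by omega)]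
      rcases Nat.lt_or_ge i (2 * m) with h | h
      · exact hpre _ h
      · have : i = 2 * m := by omega
        subst this
        exact h0
    · rw [toNatFun_lt_s15 x (by omega)]; exact h1
  have hnall : ¬ ∀ i < n, toNatFun x i = true := by
    intro h
    have := h (2 * m + 1) (by omega)
    rw [toNatFun_lt_s15 x (by omega), h1] at this
    exact Bool.false_ne_true this
  unfold DLB DLBn
  rw [if_neg hnall, hlo]
  have h2 : 2 * ((2 * m + 1) / 2) = 2 * m := by omega
  rw [h2, if_neg]
  rintro ⟨ha, -⟩
  rw [toNatFun_lt_s15 x (by omega), h0] at ha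
  simp at ha

lemma DLB_11 (h0 : x ⟨2 * m, lt2m hm⟩ = true) (h1 : x ⟨2 * m + 1, lt2m1 hm⟩ = true) :
    2 * m + 2 ≤ DLB x := by
  have hlo : 2 * m + 2 ≤ LOn n (toNatFun x) := by
    apply LOn_ge _ _ (by omega)
    intro i hi
    rw [toNatFun_lt_s15 x (by omega)]
    rcases Nat.lt_or_ge i (2 * m) with h | h
    · exact hpre _ h
    · rcases Nat.lt_or_ge i (2 * m + 1) with h' | h'
      · have : i = 2 * m := by omega
        subst this; exact h0
      · have : i = 2 * m + 1 := by omega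
        subst this; exact h1
  unfold DLB DLBn
  split
  · omega
  · have : 2 * m + 2 ≤ 2 * (LOn n (toNatFun x) / 2) := by omega
    split <;> omega

omit hpre in
lemma pre_of_DLB_ge (hge : 2 * m ≤ DLB x) : ∀ i : Fin n, (i : ℕ) < 2 * m → x i = true := by
  by_contra hcon
  push_neg at hcon
  have hex : ∃ j, j < 2 * m ∧ toNatFun x j = false := by
    obtain ⟨i, hi, hxi⟩ := hcon
    exact ⟨(i : ℕ), hi, by rw [toNatFun_lt_s15 x i.isLt, Fin.eta]; simpa using hxi⟩
  classical
  set k := Nat.find hex with hk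
  obtain ⟨hklt, hkf⟩ := Nat.find_spec hex
  have hmin : ∀ i < k, toNatFun x i = true := by
    intro i hi
    have := Nat.find_min hex hi
    push_neg at this
    have h2 : (i : ℕ) < 2 * m := by omega
    simpa using this h2
  have hlo : LOn n (toNatFun x) = k := LOn_eq _ _ (by omega) hmin hkf
  have hnall : ¬ ∀ i < n, toNatFun x i = true := by
    intro h
    have := h k (by omega)
    rw [hkf] at this
    exact Bool.false_ne_true this
  have hdlb : DLB x < 2 * m := by
    unfold DLB DLBn
    rw [if_neg hnall, hlo]
    split
    · rename_i hand
      -- in this branch, toNatFun x (2 * (k/2)) = false, so k is even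
      have hkeven : 2 * (k / 2) = k := by
        rcases Nat.lt_or_ge (2 * (k / 2)) k with h | h
        · have := hmin _ h
          rw [hand.1] at this
          exact absurd this Bool.false_ne_true
        · omega
      omega
    · omega
  omega

omit hpre in
lemma DLB_ge_iff : 2 * m ≤ DLB x ↔ ∀ i : Fin n, (i : ℕ) < 2 * m → x i = true := by
  constructor
  · exact pre_of_DLB_ge hm x
  · intro hpre
    rcases hx0 : x ⟨2 * m, lt2m hm⟩ <;> rcases hx1 : x ⟨2 * m + 1, lt2m1 hm⟩
    · rw [DLB_00 hm x hpre hx0 hx1]; omega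
    · rw [DLB_01 hm x hpre hx0 hx1]
    · rw [DLB_10 hm x hpre hx0 hx1]
    · have := DLB_11 hm x hpre hx0 hx1; omega

end DLBfacts


section Sums
variable {n m : ℕ}

def pre (m : ℕ) {n : ℕ} (x : Fin n → Bool) : Prop :=
  ∀ i : Fin n, (i : ℕ) < 2 * m → x i = true

instance : DecidablePred (pre m (n := n)) := fun _ => by unfold pre; infer_instance

noncomputable def Fx (m : ℕ) {n : ℕ} (hm : 2 * m + 2 ≤ n) (τ : Fin n → ℝ)
    (x : Fin n → Bool) (p : Bool × Bool) : ℝ :=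
  (∏ i, (if x i then τ i else 1 - τ i)) *
    ((if pre m x then 1 else 0) *
      ((if x ⟨2 * m, lt2m hm⟩ = p.1 then 1 else 0) *
       (if x ⟨2 * m + 1, lt2m1 hm⟩ = p.2 then 1 else 0)))

lemma Qval (hm : 2 * m + 2 ≤ n) (τ : Fin n → ℝ) (p : Bool × Bool) :
    ∑ x : Fin n → Bool, Fx m hm τ x p
      = (∏ i : Fin n, (if (i : ℕ) < 2 * m then τ i else 1)) *
        ((if p.1 then τ ⟨2 * m, lt2m hm⟩ else 1 - τ ⟨2 * m, lt2m hm⟩) *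
         (if p.2 then τ ⟨2 * m + 1, lt2m1 hm⟩ else 1 - τ ⟨2 * m + 1, lt2m1 hm⟩)) := by
  classical
  set i0 : Fin n := ⟨2 * m, lt2m hm⟩ with hi0
  set i1 : Fin n := ⟨2 * m + 1, lt2m1 hm⟩ with hi1
  have hne : i0 ≠ i1 := by simp [hi0, hi1, Fin.ext_iff]
  set g : Fin n → Bool → ℝ := fun i b =>
    (if b then τ i else 1 - τ i) *
      (if (((i : ℕ) < 2 * m → b = true) ∧ (i = i0 → b = p.1) ∧ (i = i1 → b = p.2))
        then 1 else 0) with hg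
  have key : ∀ x : Fin n → Bool, Fx m hm τ x p = ∏ i, g i (x i) := by
    intro x
    rw [hg]
    simp only
    rw [Finset.prod_mul_distrib]
    unfold Fx
    congr 1
    rw [Finset.prod_boole]
    have hiff : (∀ i ∈ Finset.univ,
        (((i : Fin n) : ℕ) < 2 * m → x i = true) ∧ (i = i0 → x i = p.1) ∧ (i = i1 → x i = p.2))
        ↔ (pre m x ∧ x i0 = p.1 ∧ x i1 = p.2) := by
      constructor
      · intro h
        exact ⟨fun i hi => (h i (Finset.mem_univ i)).1 hi,
          (h i0 (Finset.mem_univ i0)).2.1 rfl, (h i1 (Finset.mem_univ i1)).2.2 rfl⟩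
      · rintro ⟨h1, h2, h3⟩ i -
        exact ⟨fun hi => h1 i hi, fun hi => hi ▸ h2, fun hi => hi ▸ h3⟩
    simp only [hiff]
    by_cases hA : pre m x <;> by_cases hB : x i0 = p.1 <;> by_cases hC : x i1 = p.2 <;>
      simp [hA, hB, hC, ← hi0, ← hi1]
  rw [Finset.sum_congr rfl (fun x _ => key x), ← Fintype.piFinset_univ,
    ← Finset.prod_univ_sum]
  have percoord : ∀ i : Fin n, (∑ b : Bool, g i b)
      = (if (i : ℕ) < 2 * m then τ i else 1) *
        ((if i = i0 then (if p.1 then τ i else 1 - τ i) else 1) *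
         (if i = i1 then (if p.2 then τ i else 1 - τ i) else 1)) := by
    intro i
    by_cases h1 : (i : ℕ) < 2 * m
    · have e0 : i ≠ i0 := by rw [Fin.ne_iff_vne]; simp [hi0]; omega
      have e1 : i ≠ i1 := by rw [Fin.ne_iff_vne]; simp [hi1]; omega
      simp [hg, h1, e0, e1]
    · by_cases h2 : i = i0
      · subst h2
        rcases hp : p.1 <;> simp [hg, h1, hne, hp]
      · by_cases h3 : i = i1
        · subst h3
          rcases hp : p.2 <;> simp [hg, h1, h2, hp]
        · simp [hg, h1, h2, h3]
  rw [Finset.prod_congr rfl (fun i _ => percoord i)]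
  rw [Finset.prod_mul_distrib, Finset.prod_mul_distrib]
  rw [Finset.prod_ite_eq' Finset.univ i0 (fun i => if p.1 then τ i else 1 - τ i)]
  rw [Finset.prod_ite_eq' Finset.univ i1 (fun i => if p.2 then τ i else 1 - τ i)]
  simp

end Sums


noncomputable def Wf (u v u' v' : Bool) : ℝ :=
  if u = true ∧ v = true then 1
  else if u' = true ∧ v' = true then 1
  else if u = false ∧ v = false then 0
  else if u' = false ∧ v' = false then 0
  else ((if u = true then (1 : ℝ) else 0) + (if u' = true then 1 else 0)) / 2

section Main
variable {n m : ℕ}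

lemma w_eq (hm : 2 * m + 2 ≤ n) (x y : Fin n → Bool)
    (hpx : ∀ i : Fin n, (i : ℕ) < 2 * m → x i = true)
    (hpy : ∀ i : Fin n, (i : ℕ) < 2 * m → y i = true) :
    (if DLB y < DLB x then (if x ⟨2 * m, lt2m hm⟩ = true then (1 : ℝ) else 0)
     else if DLB x < DLB y then (if y ⟨2 * m, lt2m hm⟩ = true then (1 : ℝ) else 0)
     else ((if x ⟨2 * m, lt2m hm⟩ = true then (1 : ℝ) else 0) +
       (if y ⟨2 * m, lt2m hm⟩ = true then (1 : ℝ) else 0)) / 2)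
    = Wf (x ⟨2 * m, lt2m hm⟩) (x ⟨2 * m + 1, lt2m1 hm⟩)
        (y ⟨2 * m, lt2m hm⟩) (y ⟨2 * m + 1, lt2m1 hm⟩) := by
  have hDx := fun h0 h1 => DLB_00 hm x hpx h0 h1
  rcases hx0 : x ⟨2 * m, lt2m hm⟩ <;> rcases hx1 : x ⟨2 * m + 1, lt2m1 hm⟩ <;>
    rcases hy0 : y ⟨2 * m, lt2m hm⟩ <;> rcases hy1 : y ⟨2 * m + 1, lt2m1 hm⟩
  · have Dx := DLB_00 hm x hpx hx0 hx1; have Dy := DLB_00 hm y hpy hy0 hy1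
    split_ifs <;> first | contradiction | omega | (simp [Wf])
  · have Dx := DLB_00 hm x hpx hx0 hx1; have Dy := DLB_01 hm y hpy hy0 hy1
    split_ifs <;> first | contradiction | omega | (simp [Wf])
  · have Dx := DLB_00 hm x hpx hx0 hx1; have Dy := DLB_10 hm y hpy hy0 hy1
    split_ifs <;> first | contradiction | omega | (simp [Wf])
  · have Dx := DLB_00 hm x hpx hx0 hx1; have Dy := DLB_11 hm y hpy hy0 hy1
    split_ifs <;> first | contradiction | omega | (simp [Wf])
  · have Dx := DLB_01 hm x hpx hx0 hx1; have Dy := DLB_00 hm y hpy hy0 hy1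
    split_ifs <;> first | contradiction | omega | (simp [Wf])
  · have Dx := DLB_01 hm x hpx hx0 hx1; have Dy := DLB_01 hm y hpy hy0 hy1
    split_ifs <;> first | contradiction | omega | (simp [Wf])
  · have Dx := DLB_01 hm x hpx hx0 hx1; have Dy := DLB_10 hm y hpy hy0 hy1
    split_ifs <;> first | contradiction | omega | (simp [Wf])
  · have Dx := DLB_01 hm x hpx hx0 hx1; have Dy := DLB_11 hm y hpy hy0 hy1
    split_ifs <;> first | contradiction | omega | (simp [Wf])
  · have Dx := DLB_10 hm x hpx hx0 hx1; have Dy := DLB_00 hm y hpy hy0 hy1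
    split_ifs <;> first | contradiction | omega | (simp [Wf])
  · have Dx := DLB_10 hm x hpx hx0 hx1; have Dy := DLB_01 hm y hpy hy0 hy1
    split_ifs <;> first | contradiction | omega | (simp [Wf])
  · have Dx := DLB_10 hm x hpx hx0 hx1; have Dy := DLB_10 hm y hpy hy0 hy1
    split_ifs <;> first | contradiction | omega | (simp [Wf])
  · have Dx := DLB_10 hm x hpx hx0 hx1; have Dy := DLB_11 hm y hpy hy0 hy1
    split_ifs <;> first | contradiction | omega | (simp [Wf])
  · have Dx := DLB_11 hm x hpx hx0 hx1; have Dy := DLB_00 hm y hpy hy0 hy1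
    split_ifs <;> first | contradiction | omega | (simp [Wf])
  · have Dx := DLB_11 hm x hpx hx0 hx1; have Dy := DLB_01 hm y hpy hy0 hy1
    split_ifs <;> first | contradiction | omega | (simp [Wf])
  · have Dx := DLB_11 hm x hpx hx0 hx1; have Dy := DLB_10 hm y hpy hy0 hy1
    split_ifs <;> first | contradiction | omega | (simp [Wf])
  · have Dx := DLB_11 hm x hpx hx0 hx1; have Dy := DLB_11 hm y hpy hy0 hy1
    split_ifs <;> first | contradiction | omega | (simp [Wf]) | norm_num [Wf]

lemma num_pointwise (hm : 2 * m + 2 ≤ n) (τ : Fin n → ℝ) (x y : Fin n → Bool) :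
    (∏ i, (if x i then τ i else 1 - τ i)) * (∏ i, (if y i then τ i else 1 - τ i)) *
      (if 2 * m ≤ min (DLB x) (DLB y) then
        (if DLB y < DLB x then (if x ⟨2 * m, lt2m hm⟩ = true then (1 : ℝ) else 0)
         else if DLB x < DLB y then (if y ⟨2 * m, lt2m hm⟩ = true then (1 : ℝ) else 0)
         else ((if x ⟨2 * m, lt2m hm⟩ = true then (1 : ℝ) else 0) +
           (if y ⟨2 * m, lt2m hm⟩ = true then (1 : ℝ) else 0)) / 2)
       else 0)
    = ∑ p : Bool × Bool, ∑ q : Bool × Bool,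
        Wf p.1 p.2 q.1 q.2 * Fx m hm τ x p * Fx m hm τ y q := by
  by_cases hpx : pre m x
  · by_cases hpy : pre m y
    · have hcond : 2 * m ≤ min (DLB x) (DLB y) :=
        le_min ((DLB_ge_iff hm x).2 hpx) ((DLB_ge_iff hm y).2 hpy)
      rw [if_pos hcond, w_eq hm x y hpx hpy]
      simp only [Fintype.sum_prod_type, Fintype.sum_bool, Fx]
      rcases hx0 : x ⟨2 * m, lt2m hm⟩ <;> rcases hx1 : x ⟨2 * m + 1, lt2m1 hm⟩ <;>
        rcases hy0 : y ⟨2 * m, lt2m hm⟩ <;> rcases hy1 : y ⟨2 * m + 1, lt2m1 hm⟩ <;>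
        simp [hpx, hpy, hx0, hx1, hy0, hy1, Wf] <;> ring
    · have hc : ¬ 2 * m ≤ min (DLB x) (DLB y) := fun hc =>
        hpy (pre_of_DLB_ge hm y (le_trans hc (min_le_right _ _)))
      rw [if_neg hc]
      simp [Fx, hpy]
  · have hc : ¬ 2 * m ≤ min (DLB x) (DLB y) := fun hc =>
      hpx (pre_of_DLB_ge hm x (le_trans hc (min_le_left _ _)))
    rw [if_neg hc]
    simp [Fx, hpx]

lemma den_pointwise (hm : 2 * m + 2 ≤ n) (τ : Fin n → ℝ) (x y : Fin n → Bool) :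
    (∏ i, (if x i then τ i else 1 - τ i)) * (∏ i, (if y i then τ i else 1 - τ i)) *
      (if 2 * m ≤ min (DLB x) (DLB y) then (1 : ℝ) else 0)
    = ∑ p : Bool × Bool, ∑ q : Bool × Bool,
        (1 : ℝ) * Fx m hm τ x p * Fx m hm τ y q := by
  by_cases hpx : pre m x
  · by_cases hpy : pre m y
    · have hcond : 2 * m ≤ min (DLB x) (DLB y) :=
        le_min ((DLB_ge_iff hm x).2 hpx) ((DLB_ge_iff hm y).2 hpy)
      rw [if_pos hcond]
      simp only [Fintype.sum_prod_type, Fintype.sum_bool, Fx]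
      rcases hx0 : x ⟨2 * m, lt2m hm⟩ <;> rcases hx1 : x ⟨2 * m + 1, lt2m1 hm⟩ <;>
        rcases hy0 : y ⟨2 * m, lt2m hm⟩ <;> rcases hy1 : y ⟨2 * m + 1, lt2m1 hm⟩ <;>
        simp [hpx, hpy, hx0, hx1, hy0, hy1] <;> ring
    · have hc : ¬ 2 * m ≤ min (DLB x) (DLB y) := fun hc =>
        hpy (pre_of_DLB_ge hm y (le_trans hc (min_le_right _ _)))
      rw [if_neg hc]
      simp [Fx, hpy]
  · have hc : ¬ 2 * m ≤ min (DLB x) (DLB y) := fun hc =>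
      hpx (pre_of_DLB_ge hm x (le_trans hc (min_le_left _ _)))
    rw [if_neg hc]
    simp [Fx, hpx]

lemma exchange {α β : Type*} [Fintype α] [Fintype β] (W : β → β → ℝ) (F G : α → β → ℝ) :
    (∑ x : α, ∑ y : α, ∑ p : β, ∑ q : β, W p q * F x p * G y q)
    = ∑ p : β, ∑ q : β, W p q * (∑ x, F x p) * (∑ y, G y q) := by
  have step1 : ∀ x : α, (∑ y : α, ∑ p : β, ∑ q : β, W p q * F x p * G y q)
      = ∑ p : β, ∑ q : β, W p q * F x p * ∑ y, G y q := by
    intro x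
    rw [Finset.sum_comm]
    refine Finset.sum_congr rfl fun p _ => ?_
    rw [Finset.sum_comm]
    refine Finset.sum_congr rfl fun q _ => ?_
    rw [← Finset.mul_sum]
  calc (∑ x : α, ∑ y : α, ∑ p : β, ∑ q : β, W p q * F x p * G y q)
      = ∑ x : α, ∑ p : β, ∑ q : β, W p q * F x p * ∑ y, G y q :=
        Finset.sum_congr rfl fun x _ => step1 x
    _ = ∑ p : β, ∑ x : α, ∑ q : β, W p q * F x p * ∑ y, G y q := Finset.sum_comm
    _ = ∑ p : β, ∑ q : β, ∑ x : α, W p q * F x p * ∑ y, G y q :=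
        Finset.sum_congr rfl fun p _ => Finset.sum_comm
    _ = ∑ p : β, ∑ q : β, W p q * (∑ x, F x p) * (∑ y, G y q) := by
        refine Finset.sum_congr rfl fun p _ => Finset.sum_congr rfl fun q _ => ?_
        rw [← Finset.sum_mul, ← Finset.mul_sum]

end Main

/-- **Winner-bit probability in the sig-cGA selection step.** Let `n` be even
and positive, `m ∈ [0..n/2-1]`, and `τ ∈ [0,1]^n` a frequency vector. Let `x`
and `y` be independent random bit strings with independent bits satisfying
`Pr[x i = 1] = Pr[y i = 1] = τ i` (so a string `x` has probability
`P x = ∏ i, (if x i then τ i else 1 - τ i)`), and let `z` be the winner of `x`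
and `y` with respect to `DLB`, ties broken uniformly at random. Then,
conditioning on the positive-probability event `{min (DLB x) (DLB y) ≥ 2m}`,
the probability that `z_{2m+1} = 1` (1-based indexing; bit `2m` in 0-based
indexing) equals
`p(τ_{2m+1}, τ_{2m+2}) = τ_{2m+1}·(-τ_{2m+2}² + 3τ_{2m+2} + (τ_{2m+2}² - 3τ_{2m+2} + 1)·τ_{2m+1})`. -/
theorem sig_cGA_winner_bit_probability (n m : ℕ) (hn : 0 < n) (he : Even n)
    (hm : 2 * m + 2 ≤ n) (τ : Fin n → ℝ) (hτ : ∀ i, τ i ∈ Set.Icc (0 : ℝ) 1) :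
    let P : (Fin n → Bool) → ℝ := fun x => ∏ i, (if x i then τ i else 1 - τ i)
    let ind : (Fin n → Bool) → ℝ := fun x => if x ⟨2 * m, by omega⟩ then 1 else 0
    let w : (Fin n → Bool) → (Fin n → Bool) → ℝ := fun x y =>
      if DLB y < DLB x then ind x
      else if DLB x < DLB y then ind y
      else (ind x + ind y) / 2
    let Den : ℝ := ∑ x : Fin n → Bool, ∑ y : Fin n → Bool,
      P x * P y * (if 2 * m ≤ min (DLB x) (DLB y) then 1 else 0)
    let Num : ℝ := ∑ x : Fin n → Bool, ∑ y : Fin n → Bool,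
      P x * P y * (if 2 * m ≤ min (DLB x) (DLB y) then w x y else 0)
    0 < Den →
      Num / Den =
        τ ⟨2 * m, by omega⟩ *
          (-(τ ⟨2 * m + 1, by omega⟩) ^ 2 + 3 * τ ⟨2 * m + 1, by omega⟩ +
            ((τ ⟨2 * m + 1, by omega⟩) ^ 2 - 3 * τ ⟨2 * m + 1, by omega⟩ + 1) *
              τ ⟨2 * m, by omega⟩) := by
  intro P ind w Den Num hDen
  classical
  set a := τ ⟨2 * m, by omega⟩ with ha
  set b := τ ⟨2 * m + 1, by omega⟩ with hb
  set S : ℝ := ∏ i : Fin n, (if (i : ℕ) < 2 * m then τ i else 1) with hS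
  have hQ : ∀ p : Bool × Bool, (∑ x : Fin n → Bool, Fx m hm τ x p)
      = S * ((if p.1 then a else 1 - a) * (if p.2 then b else 1 - b)) := fun p => Qval hm τ p
  have hNum : Num = ∑ p : Bool × Bool, ∑ q : Bool × Bool,
      Wf p.1 p.2 q.1 q.2 * (S * ((if p.1 then a else 1 - a) * (if p.2 then b else 1 - b)))
        * (S * ((if q.1 then a else 1 - a) * (if q.2 then b else 1 - b))) := by
    have : Num = ∑ x : Fin n → Bool, ∑ y : Fin n → Bool,
        ∑ p : Bool × Bool, ∑ q : Bool × Bool,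
          Wf p.1 p.2 q.1 q.2 * Fx m hm τ x p * Fx m hm τ y q := by
      show (∑ x : Fin n → Bool, ∑ y : Fin n → Bool,
        (∏ i, (if x i then τ i else 1 - τ i)) * (∏ i, (if y i then τ i else 1 - τ i)) *
          (if 2 * m ≤ min (DLB x) (DLB y) then
            (if DLB y < DLB x then (if x ⟨2 * m, by omega⟩ = true then (1 : ℝ) else 0)
             else if DLB x < DLB y then (if y ⟨2 * m, by omega⟩ = true then (1 : ℝ) else 0)
             else ((if x ⟨2 * m, by omega⟩ = true then (1 : ℝ) else 0) +
               (if y ⟨2 * m, by omega⟩ = true then (1 : ℝ) else 0)) / 2)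
           else 0)) = _
      exact Finset.sum_congr rfl fun x _ => Finset.sum_congr rfl fun y _ =>
        num_pointwise hm τ x y
    rw [this, exchange]
    exact Finset.sum_congr rfl fun p _ => Finset.sum_congr rfl fun q _ => by rw [hQ, hQ]
  have hDen' : Den = ∑ p : Bool × Bool, ∑ q : Bool × Bool,
      (1 : ℝ) * (S * ((if p.1 then a else 1 - a) * (if p.2 then b else 1 - b)))
        * (S * ((if q.1 then a else 1 - a) * (if q.2 then b else 1 - b))) := by
    have : Den = ∑ x : Fin n → Bool, ∑ y : Fin n → Bool,
        ∑ p : Bool × Bool, ∑ q : Bool × Bool,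
          (1 : ℝ) * Fx m hm τ x p * Fx m hm τ y q := by
      show (∑ x : Fin n → Bool, ∑ y : Fin n → Bool,
        (∏ i, (if x i then τ i else 1 - τ i)) * (∏ i, (if y i then τ i else 1 - τ i)) *
          (if 2 * m ≤ min (DLB x) (DLB y) then (1 : ℝ) else 0)) = _
      exact Finset.sum_congr rfl fun x _ => Finset.sum_congr rfl fun y _ =>
        den_pointwise hm τ x y
    rw [this, exchange (fun _ _ => (1 : ℝ))]
    exact Finset.sum_congr rfl fun p _ => Finset.sum_congr rfl fun q _ => by rw [hQ, hQ]
  have key : Num = (a * (-b ^ 2 + 3 * b + (b ^ 2 - 3 * b + 1) * a)) * Den := by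
    rw [hNum, hDen']
    simp only [Fintype.sum_prod_type, Fintype.sum_bool, Wf]
    norm_num
    ring
  rw [key, mul_div_assoc, div_self (ne_of_gt hDen), mul_one]
end
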